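/- Let ψ_σ(x) = (2πσ²)^{-1/4} exp(-x²/(4σ²)) be the normalized Gaussian, ρ(x,y) = ψ_σ(x) ψ_σ(y), and g(ξ) = exp(-ξ²/(2ℓ²)). Then the Hilbert–Schmidt dephasing loss equals C₂^g(ρ) = ∬ (1 - g(x-y)²) |ρ(x,y)|² dx dy = 1 − 1/√(1 + 4σ²/ℓ²). -/

import Mathlib

open MeasureTheory Real

noncomputable def psiGauss (σ : ℝ) (x : ℝ) : ℝ :=
  (2 * π * σ ^ 2) ^ (-(1 / 4 : ℝ)) * Real.exp (-(x ^ 2) / (4 * σ ^ 2))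

lemma psi_sq (σ : ℝ) (hσ : 0 < σ) (x : ℝ) :
    (psiGauss σ x) ^ 2 = (Real.sqrt (2 * π * σ ^ 2))⁻¹ * Real.exp (-(1/(2*σ^2)) * x ^ 2) := by
  have h0 : (0:ℝ) < 2 * π * σ ^ 2 := by positivity
  have hσ2 : σ^2 ≠ 0 := by positivity
  unfold psiGauss
  rw [mul_pow, ← Real.exp_nat_mul, ← Real.rpow_natCast ((2 * π * σ ^ 2) ^ (-(1 / 4 : ℝ))) 2,
    ← Real.rpow_mul h0.le]
  congr 1
  · rw [show (-(1/4:ℝ)) * (2:ℕ) = -(1/2:ℝ) by norm_num, Real.rpow_neg h0.le,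
      ← Real.sqrt_eq_rpow]
  · push_cast
    field_simp
    ring

lemma continuous_psi (σ : ℝ) : Continuous (psiGauss σ) := by
  unfold psiGauss
  fun_prop

lemma int_psi_sq (σ : ℝ) (hσ : 0 < σ) :
    ∫ x : ℝ, (psiGauss σ x) ^ 2 = 1 := by
  have h0 : (0:ℝ) < 2 * π * σ ^ 2 := by positivity
  have hb : (0:ℝ) < 1/(2*σ^2) := by positivity
  simp_rw [psi_sq σ hσ]
  rw [integral_const_mul, integral_gaussian]
  rw [show π / (1/(2*σ^2)) = 2 * π * σ^2 by field_simp]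
  rw [inv_mul_cancel₀]
  exact (Real.sqrt_pos.mpr h0).ne'

lemma integrable_psi_sq (σ : ℝ) (hσ : 0 < σ) :
    Integrable (fun x : ℝ => (psiGauss σ x) ^ 2) := by
  have hb : (0:ℝ) < 1/(2*σ^2) := by positivity
  simp_rw [psi_sq σ hσ]
  exact (integrable_exp_neg_mul_sq hb).const_mul _

/-- For the Gaussian pure state `ρ(x,y) = ψ_σ(x)ψ_σ(y)` and the Gaussian dephasing
kernel `g(ξ) = exp(-ξ²/(2ℓ²))`, the Hilbert–Schmidt dephasing loss equals
`C₂^g(ρ) = ∬ (1 - g(x-y)²)|ρ(x,y)|² dx dy = 1 − 1/√(1 + 4σ²/ℓ²)`. -/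
theorem gaussian_C2_dephasing_loss (σ ℓ : ℝ) (hσ : 0 < σ) (hℓ : 0 < ℓ) :
    (∫ q : ℝ × ℝ,
        (1 - Real.exp (-((q.1 - q.2) ^ 2) / ℓ ^ 2)) *
          (psiGauss σ q.1 * psiGauss σ q.2) ^ 2) =
      1 - 1 / Real.sqrt (1 + 4 * σ ^ 2 / ℓ ^ 2) := by
  have hσ2 : (0:ℝ) < σ^2 := by positivity
  have hℓ2 : (0:ℝ) < ℓ^2 := by positivity
  set a : ℝ := 1/(2*σ^2) + 1/ℓ^2 with ha_def
  have ha : 0 < a := by positivity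
  set m : ℝ := 1/(a*ℓ^2) with hm_def
  set β : ℝ := a - 1/(a*ℓ^4) with hβ_def
  have haℓ : 1 < a * ℓ^2 := by
    rw [ha_def]; rw [add_mul]
    have : (1/ℓ^2) * ℓ^2 = 1 := by field_simp
    nlinarith [mul_pos (by positivity : (0:ℝ) < 1/(2*σ^2)) hℓ2]
  have hβ : 0 < β := by
    rw [hβ_def]
    rw [sub_pos, div_lt_iff₀ (by positivity)]
    have h4 : a * ℓ^4 = (a*ℓ^2) * ℓ^2 := by ring
    nlinarith
  have h0 : (0:ℝ) < 2 * π * σ ^ 2 := by positivity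
  have hc : (Real.sqrt (2 * π * σ ^ 2)) ≠ 0 := (Real.sqrt_pos.mpr h0).ne'
  -- pointwise identity for the exponents
  have key : ∀ x y : ℝ,
      Real.exp (-((x - y) ^ 2) / ℓ ^ 2) * ((Real.sqrt (2 * π * σ ^ 2))⁻¹ * Real.exp (-(1/(2*σ^2)) * x ^ 2))
        * ((Real.sqrt (2 * π * σ ^ 2))⁻¹ * Real.exp (-(1/(2*σ^2)) * y ^ 2))
      = ((Real.sqrt (2 * π * σ ^ 2))⁻¹)^2 *
          (Real.exp (-a * (x - m*y)^2) * Real.exp (-β * y^2)) := by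
    intro x y
    have hexp : -((x - y) ^ 2) / ℓ ^ 2 + (-(1/(2*σ^2)) * x ^ 2 + -(1/(2*σ^2)) * y ^ 2)
        = -a * (x - m*y)^2 + -β * y^2 := by
      rw [hβ_def, hm_def, ha_def]
      have h1 : (1/(2*σ^2) + 1/ℓ^2) ≠ 0 := by positivity
      field_simp
      ring
    calc Real.exp (-((x - y) ^ 2) / ℓ ^ 2) * ((Real.sqrt (2 * π * σ ^ 2))⁻¹ * Real.exp (-(1/(2*σ^2)) * x ^ 2))
        * ((Real.sqrt (2 * π * σ ^ 2))⁻¹ * Real.exp (-(1/(2*σ^2)) * y ^ 2))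
        = ((Real.sqrt (2 * π * σ ^ 2))⁻¹)^2 *
            Real.exp (-((x - y) ^ 2) / ℓ ^ 2 + (-(1/(2*σ^2)) * x ^ 2 + -(1/(2*σ^2)) * y ^ 2)) := by
          rw [Real.exp_add, Real.exp_add]; ring
      _ = _ := by rw [hexp, Real.exp_add]
  -- integrability of the product density
  have hP : Integrable (fun q : ℝ × ℝ => (psiGauss σ q.1)^2 * (psiGauss σ q.2)^2) := by
    rw [Measure.volume_eq_prod]
    exact (integrable_psi_sq σ hσ).mul_prod (integrable_psi_sq σ hσ)
  have hEP : Integrable (fun q : ℝ × ℝ =>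
      Real.exp (-((q.1 - q.2) ^ 2) / ℓ ^ 2) * (psiGauss σ q.1 * psiGauss σ q.2) ^ 2) := by
    apply hP.mono
    · apply Continuous.aestronglyMeasurable
      apply Continuous.mul
      · exact Real.continuous_exp.comp (by fun_prop)
      · exact (((continuous_psi σ).comp continuous_fst).mul
          ((continuous_psi σ).comp continuous_snd)).pow 2
    · filter_upwards with q
      rw [Real.norm_eq_abs, Real.norm_eq_abs, mul_pow]
      have h1 : Real.exp (-((q.1 - q.2) ^ 2) / ℓ ^ 2) ≤ 1 := by
        apply Real.exp_le_one_iff.mpr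
        exact div_nonpos_of_nonpos_of_nonneg (neg_nonpos.mpr (by positivity)) (by positivity)
      have h2 : (0:ℝ) ≤ (psiGauss σ q.1)^2 * (psiGauss σ q.2)^2 := by positivity
      rw [abs_of_nonneg (by positivity), abs_of_nonneg h2]
      nlinarith [Real.exp_pos (-((q.1 - q.2) ^ 2) / ℓ ^ 2)]
  -- split
  have hsplit : (∫ q : ℝ × ℝ,
        (1 - Real.exp (-((q.1 - q.2) ^ 2) / ℓ ^ 2)) * (psiGauss σ q.1 * psiGauss σ q.2) ^ 2)
      = (∫ q : ℝ × ℝ, (psiGauss σ q.1)^2 * (psiGauss σ q.2)^2)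
        - ∫ q : ℝ × ℝ, Real.exp (-((q.1 - q.2) ^ 2) / ℓ ^ 2) * (psiGauss σ q.1 * psiGauss σ q.2) ^ 2 := by
    rw [← MeasureTheory.integral_sub hP hEP]
    congr 1; funext q; rw [mul_pow]; ring
  rw [hsplit]
  have h1 : (∫ q : ℝ × ℝ, (psiGauss σ q.1)^2 * (psiGauss σ q.2)^2) = 1 := by
    rw [Measure.volume_eq_prod]
    rw [MeasureTheory.integral_prod_mul (fun x : ℝ => (psiGauss σ x)^2) (fun y : ℝ => (psiGauss σ y)^2),
      int_psi_sq σ hσ]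
    norm_num
  have h2 : (∫ q : ℝ × ℝ, Real.exp (-((q.1 - q.2) ^ 2) / ℓ ^ 2) * (psiGauss σ q.1 * psiGauss σ q.2) ^ 2)
      = 1 / Real.sqrt (1 + 4 * σ ^ 2 / ℓ ^ 2) := by
    have heq : ∀ q : ℝ × ℝ, Real.exp (-((q.1 - q.2) ^ 2) / ℓ ^ 2) * (psiGauss σ q.1 * psiGauss σ q.2) ^ 2
        = ((Real.sqrt (2 * π * σ ^ 2))⁻¹)^2 *
          (Real.exp (-a * (q.1 - m*q.2)^2) * Real.exp (-β * q.2^2)) := by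
      intro q
      rw [mul_pow, psi_sq σ hσ, psi_sq σ hσ, ← key q.1 q.2]; ring
    simp_rw [heq]
    rw [integral_const_mul]
    have hk : (((Real.sqrt (2 * π * σ ^ 2))⁻¹ : ℝ)^2) ≠ 0 := by positivity
    have hF : Integrable (fun q : ℝ × ℝ => Real.exp (-a * (q.1 - m*q.2)^2) * Real.exp (-β * q.2^2)) := by
      have h := hEP.const_mul ((((Real.sqrt (2 * π * σ ^ 2))⁻¹)^2 : ℝ))⁻¹
      simp_rw [heq, ← mul_assoc, inv_mul_cancel₀ hk, one_mul] at h
      exact h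
    rw [Measure.volume_eq_prod] at hF ⊢
    rw [MeasureTheory.integral_prod_symm _ hF]
    have hinner : ∀ y : ℝ, (∫ x : ℝ, Real.exp (-a * (x - m*y)^2) * Real.exp (-β * y^2))
        = Real.sqrt (π / a) * Real.exp (-β * y^2) := by
      intro y
      rw [integral_mul_const]
      congr 1
      have h := MeasureTheory.integral_sub_right_eq_self (μ := volume)
        (fun x : ℝ => Real.exp (-a * x^2)) (m*y)
      rw [← integral_gaussian a, ← h]
    simp_rw [hinner]
    rw [integral_const_mul, integral_gaussian]
    -- final algebra
    rw [inv_pow, Real.sq_sqrt h0.le, one_div, ← Real.sqrt_inv,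
      show ((2 * π * σ ^ 2)⁻¹ : ℝ) = Real.sqrt (((2 * π * σ ^ 2)⁻¹)^2) from
        (Real.sqrt_sq (by positivity)).symm,
      ← Real.sqrt_mul (by positivity), ← Real.sqrt_mul (by positivity)]
    congr 1
    have hπ : π ≠ 0 := Real.pi_ne_zero
    have hab : a * β = (1 + 4*σ^2/ℓ^2)/(4*σ^4) := by
      rw [hβ_def, ha_def]
      field_simp
      ring
    set D : ℝ := 1 + 4*σ^2/ℓ^2 with hD_def
    have hD : (0:ℝ) < D := by rw [hD_def]; positivity
    rw [div_mul_div_comm, hab]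
    field_simp
    norm_num
  rw [h1, h2]
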